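/- Let α > 1, let a_1,…,a_n and t be positive integers with t < a := Σ_{i=1}^n a_i, and let m = ⌈3α²⌉. Consider the market N(a,t,α) with doctors d_i^j (i ∈ {1,…,n}, j ∈ {0,1,…,m}), hospitals h^+, h^-, and h_i^j (i ∈ {1,…,n}, j ∈ {0,…,m−1}), and contracts: r^{i,1} = (d_i^0,h^+) with u = s = a_i/t; r^{i,2} = (d_i^0,h^-) with u = s = a_i/(a−t); r^{i,3} = (d_i^0,h_i^0) with u = s = 1; x^{i,j} = (d_i^j,h_i^0) with u = 2α/m, s = 1/m for j = 1,…,m; y^{i,j} = (d_i^j,h_i^{j−1}) with u = s = 1 for j = 2,…,m; z^{i,j} = (d_i^j,h_i^j) with u = 2α, s = 1 for j = 1,…,m−1; preferences: r^{i,1} ≻_{d_i^0} r^{i,2} ≻_{d_i^0} r^{i,3} ≻_{d_i^0} ∅; x^{i,1} ≻_{d_i^1} z^{i,1} ≻_{d_i^1} ∅; y^{i,j} ≻_{d_i^j} x^{i,j} ≻_{d_i^j} z^{i,j} ≻_{d_i^j} ∅ for j = 2,…,m−1; y^{i,m} ≻_{d_i^m} x^{i,m} ≻_{d_i^m} ∅.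 If there exists no I ⊆ {1,…,n} with Σ_{i∈I} a_i = t, then the market N(a,t,α) admits no α-stable matching. More precisely, any matching X' satisfying X' ∩ {r^{i*,1}, r^{i*,2}} = ∅ for some index i* is not α-stable. -/

import Mathlib

/-- A two-sided matching market with monetary transfers and budget constraints,
following Kawase–Iwasaki. `D` is the set of doctors, `H` the set of hospitals,
`X` the set of contracts; each contract has a doctor `doc x`, a hospital `hos x`,
a utility `u x ≥ 0` and a size (wage as a fraction of the budget) `s x ≥ 0`.
For each doctor `d`, `pref d` is a strict linear order on `X_d ∪ {∅}`, the
null contract `∅` being represented by `none`. -/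
structure Market where
  D : Type
  H : Type
  X : Type
  fintypeX : Fintype X
  decEqX : DecidableEq X
  decEqD : DecidableEq D
  decEqH : DecidableEq H
  doc : X → D
  hos : X → H
  pref : D → Option X → Option X → Prop
  u : X → ℝ
  s : X → ℝ
  u_nonneg : ∀ x, 0 ≤ u x
  s_nonneg : ∀ x, 0 ≤ s x
  pref_irrefl : ∀ d o, ¬ pref d o o
  pref_trans : ∀ d o₁ o₂ o₃, pref d o₁ o₂ → pref d o₂ o₃ → pref d o₁ o₃
  pref_total : ∀ d (o₁ o₂ : Option X),
    (∀ x, o₁ = some x → doc x = d) → (∀ x, o₂ = some x → doc x = d) →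
    o₁ ≠ o₂ → pref d o₁ o₂ ∨ pref d o₂ o₁

attribute [instance] Market.fintypeX Market.decEqX Market.decEqD Market.decEqH

namespace Market

variable (M : Market)

/-- `X'_d`: the contracts of `X'` associated with doctor `d`. -/
def restrD (X' : Finset M.X) (d : M.D) : Finset M.X := X'.filter (fun x => M.doc x = d)

/-- `X'_h`: the contracts of `X'` associated with hospital `h`. -/
def restrH (X' : Finset M.X) (h : M.H) : Finset M.X := X'.filter (fun x => M.hos x = h)

/-- `s(X') = Σ_{x ∈ X'} s(x)`. -/
def sSum (X' : Finset M.X) : ℝ := ∑ x ∈ X', M.s x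

/-- `u(X') = Σ_{x ∈ X'} u(x)`. -/
def uSum (X' : Finset M.X) : ℝ := ∑ x ∈ X', M.u x

/-- A matching: each doctor signs at most one contract and each hospital's
total wages are within its budget. -/
def IsMatching (X' : Finset M.X) : Prop :=
  (∀ d, (M.restrD X' d).card ≤ 1) ∧ (∀ h, M.sSum (M.restrH X' h) ≤ 1)

/-- Contract `x` is strictly preferred by its doctor to her assignment under `X'`
(to the null contract in case she is unassigned). -/
def Prefers (X' : Finset M.X) (x : M.X) : Prop :=
  (∀ x' ∈ M.restrD X' (M.doc x), M.pref (M.doc x) (some x) (some x')) ∧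
  (M.restrD X' (M.doc x) = ∅ → M.pref (M.doc x) (some x) none)

/-- `X''` is an `α`-blocking coalition of hospital `h` for the matching `X'`. -/
def IsBlocking (α : ℝ) (X' : Finset M.X) (h : M.H) (X'' : Finset M.X) : Prop :=
  (∀ x ∈ X'', M.hos x = h) ∧ M.IsMatching X'' ∧
  (∀ x ∈ X'' \ X', M.Prefers X' x) ∧
  M.uSum X'' > α * M.uSum (M.restrH X' h)

/-- `X'` is an `α`-stable matching: it is a matching admitting no `α`-blocking coalition. -/
def IsStable (α : ℝ) (X' : Finset M.X) : Prop :=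
  M.IsMatching X' ∧ ∀ h X'', ¬ M.IsBlocking α X' h X''

end Market

open scoped Classical

section RankPref

/-- A strict linear order induced by a rank function (smaller rank = more preferred),
with ties broken by an encoding of the underlying countable type. -/
def rankPref {β : Type} [Encodable β] (rank : β → ℕ) (o o' : β) : Prop :=
  rank o < rank o' ∨ (rank o = rank o' ∧ Encodable.encode o < Encodable.encode o')

theorem rankPref_irrefl {β : Type} [Encodable β] (rank : β → ℕ) (o : β) :
    ¬ rankPref rank o o := by
  rintro (h | ⟨-, h⟩) <;> exact lt_irrefl _ h

theorem rankPref_trans {β : Type} [Encodable β] (rank : β → ℕ) (o₁ o₂ o₃ : β)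
    (h₁ : rankPref rank o₁ o₂) (h₂ : rankPref rank o₂ o₃) : rankPref rank o₁ o₃ := by
  rcases h₁ with h₁ | ⟨e₁, l₁⟩ <;> rcases h₂ with h₂ | ⟨e₂, l₂⟩
  · exact Or.inl (h₁.trans h₂)
  · exact Or.inl (e₂ ▸ h₁)
  · exact Or.inl (e₁ ▸ h₂)
  · exact Or.inr ⟨e₁.trans e₂, l₁.trans l₂⟩

theorem rankPref_total {β : Type} [Encodable β] (rank : β → ℕ) (o₁ o₂ : β)
    (hne : o₁ ≠ o₂) : rankPref rank o₁ o₂ ∨ rankPref rank o₂ o₁ := by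
  rcases lt_trichotomy (rank o₁) (rank o₂) with h | h | h
  · exact Or.inl (Or.inl h)
  · rcases lt_or_gt_of_ne (fun he => hne (Encodable.encode_injective he)) with h' | h'
    · exact Or.inl (Or.inr ⟨h, h'⟩)
    · exact Or.inr (Or.inr ⟨h.symm, h'⟩)
  · exact Or.inr (Or.inl h)

end RankPref

namespace SubsetSumGen

/-- Contracts of the market `N(a,t,α)`:
`.inl (i,k)` is `r^{i,k+1}` (`k ∈ {0,1,2}`);
`.inr (.inl (i,j₀))` is `x^{i,j₀+1}` (`j₀+1 ∈ {1,…,m}`);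
`.inr (.inr (.inl (i,j₀)))` is `y^{i,j₀+2}` (`j₀+2 ∈ {2,…,m}`);
`.inr (.inr (.inr (i,j₀)))` is `z^{i,j₀+1}` (`j₀+1 ∈ {1,…,m-1}`). -/
abbrev XN (n m : ℕ) :=
  (Fin n × Fin 3) ⊕ ((Fin n × Fin m) ⊕ ((Fin n × Fin (m - 1)) ⊕ (Fin n × Fin (m - 1))))

/-- Doctors are `d_i^j` for `i ∈ {1,…,n}`, `j ∈ {0,…,m}`. -/
abbrev DN (n m : ℕ) := Fin n × Fin (m + 1)

/-- Hospitals: `.inl 0 = h⁺`, `.inl 1 = h⁻`, `.inr (i,j) = h_i^j` for `j ∈ {0,…,m-1}`. -/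
abbrev HN (n m : ℕ) := Fin 2 ⊕ (Fin n × Fin m)

/-- Doctor of each contract: `r^{i,·} ↦ d_i^0`, `x^{i,j} ↦ d_i^j`, `y^{i,j} ↦ d_i^j`,
`z^{i,j} ↦ d_i^j`. -/
def docN (n m : ℕ) : XN n m → DN n m
  | .inl (i, _) => (i, ⟨0, by omega⟩)
  | .inr (.inl (i, j₀)) => (i, ⟨(j₀ : ℕ) + 1, by have := j₀.isLt; omega⟩)
  | .inr (.inr (.inl (i, j₀))) => (i, ⟨(j₀ : ℕ) + 2, by have := j₀.isLt; omega⟩)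
  | .inr (.inr (.inr (i, j₀))) => (i, ⟨(j₀ : ℕ) + 1, by have := j₀.isLt; omega⟩)

/-- Hospital of each contract: `r^{i,1} ↦ h⁺`, `r^{i,2} ↦ h⁻`, `r^{i,3} ↦ h_i^0`,
`x^{i,j} ↦ h_i^0`, `y^{i,j} ↦ h_i^{j-1}`, `z^{i,j} ↦ h_i^j`. -/
def hosN (n m : ℕ) (hm : 0 < m) : XN n m → HN n m
  | .inl (i, k) =>
      if (k : ℕ) = 0 then .inl 0
      else if (k : ℕ) = 1 then .inl 1
      else .inr (i, ⟨0, hm⟩)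
  | .inr (.inl (i, _)) => .inr (i, ⟨0, hm⟩)
  | .inr (.inr (.inl (i, j₀))) => .inr (i, ⟨(j₀ : ℕ) + 1, by have := j₀.isLt; omega⟩)
  | .inr (.inr (.inr (i, j₀))) => .inr (i, ⟨(j₀ : ℕ) + 1, by have := j₀.isLt; omega⟩)

/-- Utilities: `u(r^{i,1}) = aᵢ/t`, `u(r^{i,2}) = aᵢ/(a−t)`, `u(r^{i,3}) = 1`,
`u(x^{i,j}) = 2α/m`, `u(y^{i,j}) = 1`, `u(z^{i,j}) = 2α`. -/
noncomputable def uN (n m : ℕ) (a : Fin n → ℕ) (t : ℕ) (α : ℝ) : XN n m → ℝ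
  | .inl (i, k) =>
      if (k : ℕ) = 0 then (a i : ℝ) / (t : ℝ)
      else if (k : ℕ) = 1 then (a i : ℝ) / ((∑ j, (a j : ℝ)) - (t : ℝ))
      else 1
  | .inr (.inl _) => 2 * α / (m : ℝ)
  | .inr (.inr (.inl _)) => 1
  | .inr (.inr (.inr _)) => 2 * α

/-- Sizes: `s(r^{i,1}) = aᵢ/t`, `s(r^{i,2}) = aᵢ/(a−t)`, `s(r^{i,3}) = 1`,
`s(x^{i,j}) = 1/m`, `s(y^{i,j}) = 1`, `s(z^{i,j}) = 1`. -/
noncomputable def sN (n m : ℕ) (a : Fin n → ℕ) (t : ℕ) : XN n m → ℝ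
  | .inl (i, k) =>
      if (k : ℕ) = 0 then (a i : ℝ) / (t : ℝ)
      else if (k : ℕ) = 1 then (a i : ℝ) / ((∑ j, (a j : ℝ)) - (t : ℝ))
      else 1
  | .inr (.inl _) => 1 / (m : ℝ)
  | .inr (.inr (.inl _)) => 1
  | .inr (.inr (.inr _)) => 1

/-- Ranks encoding the preferences
`r^{i,1} ≻_{d_i^0} r^{i,2} ≻_{d_i^0} r^{i,3} ≻_{d_i^0} ∅`,
`x^{i,1} ≻_{d_i^1} z^{i,1} ≻_{d_i^1} ∅`,
`y^{i,j} ≻_{d_i^j} x^{i,j} ≻_{d_i^j} z^{i,j} ≻_{d_i^j} ∅` (`2 ≤ j ≤ m−1`), and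
`y^{i,m} ≻_{d_i^m} x^{i,m} ≻_{d_i^m} ∅`. -/
def rankN (n m : ℕ) (d : DN n m) : Option (XN n m) → ℕ
  | none => 4
  | some (.inl (i, k)) => if i = d.1 ∧ (d.2 : ℕ) = 0 then (k : ℕ) else 9
  | some (.inr (.inl (i, j₀))) =>
      if i = d.1 ∧ (d.2 : ℕ) = (j₀ : ℕ) + 1 then (if (d.2 : ℕ) = 1 then 0 else 1) else 9
  | some (.inr (.inr (.inl (i, j₀)))) =>
      if i = d.1 ∧ (d.2 : ℕ) = (j₀ : ℕ) + 2 then 0 else 9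
  | some (.inr (.inr (.inr (i, j₀)))) =>
      if i = d.1 ∧ (d.2 : ℕ) = (j₀ : ℕ) + 1 then (if (d.2 : ℕ) = 1 then 1 else 2) else 9

/-- The market `N(a,t,α)` of the subset-sum reduction (with `m = ⌈3α²⌉`). -/
noncomputable def mkt (n m : ℕ) (a : Fin n → ℕ) (t : ℕ) (α : ℝ)
    (hm : 0 < m) (hta : (t : ℝ) < ∑ j, (a j : ℝ)) (hα : 0 ≤ α) : Market where
  D := DN n m
  H := HN n m
  X := XN n m
  fintypeX := inferInstance
  decEqX := inferInstance
  decEqD := inferInstance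
  decEqH := inferInstance
  doc := docN n m
  hos := hosN n m hm
  pref := fun d => rankPref (rankN n m d)
  u := uN n m a t α
  s := sN n m a t
  u_nonneg := by
    rintro ((⟨i, k⟩) | ((⟨i, j₀⟩) | ((⟨i, j₀⟩) | (⟨i, j₀⟩))))
    · simp only [uN]
      split_ifs
      · positivity
      · exact div_nonneg (by positivity) (by linarith)
      · norm_num
    · simp only [uN]; positivity
    · simp only [uN]; norm_num
    · simp only [uN]; positivity
  s_nonneg := by
    rintro ((⟨i, k⟩) | ((⟨i, j₀⟩) | ((⟨i, j₀⟩) | (⟨i, j₀⟩))))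
    · simp only [sN]
      split_ifs
      · positivity
      · exact div_nonneg (by positivity) (by linarith)
      · norm_num
    · simp only [sN]; positivity
    · simp only [sN]; norm_num
    · simp only [sN]; norm_num
  pref_irrefl := fun d o => rankPref_irrefl _ o
  pref_trans := fun d o₁ o₂ o₃ => rankPref_trans _ o₁ o₂ o₃
  pref_total := fun d o₁ o₂ _ _ hne => rankPref_total _ o₁ o₂ hne

/-- The claimed stable matching
`{r^{i,1} : i ∈ I*} ∪ {r^{i,2} : i ∉ I*} ∪ ⋃ᵢ ({x^{i,1}} ∪ {y^{i,2},…,y^{i,m}})`. -/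
noncomputable def stableSet (n m : ℕ) (I : Finset (Fin n)) : Finset (XN n m) :=
  Finset.univ.filter (fun c => match c with
    | .inl (i, k) => ((k : ℕ) = 0 ∧ i ∈ I) ∨ ((k : ℕ) = 1 ∧ i ∉ I)
    | .inr (.inl (_, j₀)) => (j₀ : ℕ) = 0
    | .inr (.inr (.inl _)) => True
    | .inr (.inr (.inr _)) => False)

end SubsetSumGen
namespace Market

theorem uSum_nonneg' (M : Market) (A : Finset M.X) : 0 ≤ M.uSum A :=
  Finset.sum_nonneg fun x _ => M.u_nonneg x

theorem uSum_mono (M : Market) {A B : Finset M.X} (h : A ⊆ B) : M.uSum A ≤ M.uSum B :=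
  Finset.sum_le_sum_of_subset_of_nonneg h fun x _ _ => M.u_nonneg x

theorem sSum_mono (M : Market) {A B : Finset M.X} (h : A ⊆ B) : M.sSum A ≤ M.sSum B :=
  Finset.sum_le_sum_of_subset_of_nonneg h fun x _ _ => M.s_nonneg x

theorem mem_restrD' {M : Market} {X' : Finset M.X} {d : M.D} {x : M.X} :
    x ∈ M.restrD X' d ↔ x ∈ X' ∧ M.doc x = d := by
  simp [Market.restrD]

theorem mem_restrH' {M : Market} {X' : Finset M.X} {h : M.H} {x : M.X} :
    x ∈ M.restrH X' h ↔ x ∈ X' ∧ M.hos x = h := by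
  simp [Market.restrH]

theorem isMatching_singleton (M : Market) (c : M.X) (hs : M.s c ≤ 1) : M.IsMatching {c} := by
  refine ⟨fun d => ?_, fun h => ?_⟩
  · simpa [Market.restrD] using Finset.card_filter_le {c} (fun x => M.doc x = d)
  · calc M.sSum (M.restrH {c} h) ≤ M.sSum {c} := M.sSum_mono (Finset.filter_subset _ _)
    _ = M.s c := Finset.sum_singleton _ _
    _ ≤ 1 := hs

theorem doc_excl (M : Market) {X' : Finset M.X} (hM : M.IsMatching X') {c₁ c₂ : M.X}
    (hne : c₁ ≠ c₂) (h₁ : c₁ ∈ X') (h₂ : c₂ ∈ X') (hd : M.doc c₁ = M.doc c₂) : False := by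
  have hsub : {c₁, c₂} ⊆ M.restrD X' (M.doc c₁) := by
    intro x hx
    rcases Finset.mem_insert.mp hx with rfl | hx
    · exact mem_restrD'.mpr ⟨h₁, rfl⟩
    · rw [Finset.mem_singleton] at hx; subst hx
      exact mem_restrD'.mpr ⟨h₂, hd.symm⟩
  have hc := (Finset.card_le_card hsub).trans (hM.1 (M.doc c₁))
  rw [Finset.card_pair hne] at hc
  omega

theorem pair_budget (M : Market) {X' : Finset M.X} (hM : M.IsMatching X') {c₁ c₂ : M.X}
    {h : M.H} (hne : c₁ ≠ c₂) (h₁ : c₁ ∈ X') (h₂ : c₂ ∈ X')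
    (e₁ : M.hos c₁ = h) (e₂ : M.hos c₂ = h) : M.s c₁ + M.s c₂ ≤ 1 := by
  have hsub : {c₁, c₂} ⊆ M.restrH X' h := by
    intro x hx
    rcases Finset.mem_insert.mp hx with rfl | hx
    · exact mem_restrH'.mpr ⟨h₁, e₁⟩
    · rw [Finset.mem_singleton] at hx; subst hx
      exact mem_restrH'.mpr ⟨h₂, e₂⟩
  have h1 := M.sSum_mono hsub
  rw [Market.sSum, Finset.sum_pair hne] at h1
  exact h1.trans (hM.2 h)

end Market
namespace SubsetSumGen

variable {n m : ℕ}

/-- `r^{i,1}`. -/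
def r1C (i : Fin n) : XN n m := Sum.inl (i, ⟨0, by decide⟩)
/-- `r^{i,2}`. -/
def r2C (i : Fin n) : XN n m := Sum.inl (i, ⟨1, by decide⟩)
/-- `r^{i,3}`. -/
def r3C (i : Fin n) : XN n m := Sum.inl (i, ⟨2, by decide⟩)
/-- `x^{i,j+1}`. -/
def xC (i : Fin n) (j : Fin m) : XN n m := Sum.inr (Sum.inl (i, j))
/-- `y^{i,j+2}`. -/
def yC (i : Fin n) (j : Fin (m-1)) : XN n m := Sum.inr (Sum.inr (Sum.inl (i, j)))
/-- `z^{i,j+1}`. -/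
def zC (i : Fin n) (j : Fin (m-1)) : XN n m := Sum.inr (Sum.inr (Sum.inr (i, j)))

theorem docN_r1 (i : Fin n) : docN n m (r1C i) = (i, ⟨0, by omega⟩) := rfl
theorem docN_r2 (i : Fin n) : docN n m (r2C i) = (i, ⟨0, by omega⟩) := rfl
theorem docN_r3 (i : Fin n) : docN n m (r3C i) = (i, ⟨0, by omega⟩) := rfl
theorem docN_x (i : Fin n) (j : Fin m) :
    docN n m (xC i j) = (i, ⟨(j : ℕ) + 1, by have := j.isLt; omega⟩) := rfl
theorem docN_y (i : Fin n) (j : Fin (m-1)) :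
    docN n m (yC i j) = (i, ⟨(j : ℕ) + 2, by have := j.isLt; omega⟩) := rfl
theorem docN_z (i : Fin n) (j : Fin (m-1)) :
    docN n m (zC i j) = (i, ⟨(j : ℕ) + 1, by have := j.isLt; omega⟩) := rfl

variable (hm0 : 0 < m)

theorem hosN_r1 (i : Fin n) : hosN n m hm0 (r1C i) = Sum.inl 0 := rfl
theorem hosN_r2 (i : Fin n) : hosN n m hm0 (r2C i) = Sum.inl 1 := rfl
theorem hosN_r3 (i : Fin n) : hosN n m hm0 (r3C i) = Sum.inr (i, ⟨0, hm0⟩) := rfl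
theorem hosN_x (i : Fin n) (j : Fin m) : hosN n m hm0 (xC i j) = Sum.inr (i, ⟨0, hm0⟩) := rfl
theorem hosN_y (i : Fin n) (j : Fin (m-1)) :
    hosN n m hm0 (yC i j) = Sum.inr (i, ⟨(j : ℕ) + 1, by have := j.isLt; omega⟩) := rfl
theorem hosN_z (i : Fin n) (j : Fin (m-1)) :
    hosN n m hm0 (zC i j) = Sum.inr (i, ⟨(j : ℕ) + 1, by have := j.isLt; omega⟩) := rfl

/-- Which contracts belong to a given doctor. -/
theorem doc_cases {c : XN n m} {i : Fin n} {q : Fin (m+1)} (h : docN n m c = (i, q)) :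
    (((q : ℕ) = 0 ∧ (c = r1C i ∨ c = r2C i ∨ c = r3C i)) ∨
     (∃ j : Fin m, c = xC i j ∧ (q : ℕ) = (j : ℕ) + 1) ∨
     (∃ j : Fin (m-1), c = yC i j ∧ (q : ℕ) = (j : ℕ) + 2) ∨
     (∃ j : Fin (m-1), c = zC i j ∧ (q : ℕ) = (j : ℕ) + 1)) := by
  rcases c with ⟨i', k⟩ | ⟨i', j⟩ | ⟨i', j⟩ | ⟨i', j⟩
  · simp only [docN, Prod.mk.injEq] at h
    obtain ⟨rfl, hq⟩ := h
    left
    refine ⟨by rw [← hq], ?_⟩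
    have hk := k.isLt
    have hk3 : (k : ℕ) = 0 ∨ (k : ℕ) = 1 ∨ (k : ℕ) = 2 := by omega
    rcases hk3 with h0 | h0 | h0
    · have hk2 : k = (⟨0, by decide⟩ : Fin 3) := Fin.ext h0
      subst hk2; exact Or.inl rfl
    · have hk2 : k = (⟨1, by decide⟩ : Fin 3) := Fin.ext h0
      subst hk2; exact Or.inr (Or.inl rfl)
    · have hk2 : k = (⟨2, by decide⟩ : Fin 3) := Fin.ext h0
      subst hk2; exact Or.inr (Or.inr rfl)
  · simp only [docN, Prod.mk.injEq] at h
    obtain ⟨rfl, hq⟩ := h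
    exact Or.inr (Or.inl ⟨j, rfl, by rw [← hq]⟩)
  · simp only [docN, Prod.mk.injEq] at h
    obtain ⟨rfl, hq⟩ := h
    exact Or.inr (Or.inr (Or.inl ⟨j, rfl, by rw [← hq]⟩))
  · simp only [docN, Prod.mk.injEq] at h
    obtain ⟨rfl, hq⟩ := h
    exact Or.inr (Or.inr (Or.inr ⟨j, rfl, by rw [← hq]⟩))

/-- Which contracts belong to the hospital `h_i^0`. -/
theorem hos_cases_h0 {c : XN n m} {i : Fin n}
    (h : hosN n m hm0 c = Sum.inr (i, ⟨0, hm0⟩)) : c = r3C i ∨ ∃ j, c = xC i j := by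
  rcases c with ⟨i', k⟩ | ⟨i', j⟩ | ⟨i', j⟩ | ⟨i', j⟩
  · simp only [hosN] at h
    have hk := k.isLt
    have hk3 : (k : ℕ) = 0 ∨ (k : ℕ) = 1 ∨ (k : ℕ) = 2 := by omega
    rcases hk3 with h0 | h0 | h0
    · rw [if_pos h0] at h
      exact absurd h (by simp)
    · rw [if_neg (by omega), if_pos h0] at h
      exact absurd h (by simp)
    · rw [if_neg (by omega), if_neg (by omega)] at h
      have hi : i' = i := congrArg Prod.fst (Sum.inr.inj h)
      subst hi
      left
      have hk2 : k = (⟨2, by decide⟩ : Fin 3) := Fin.ext h0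
      subst hk2; rfl
  · have hi : i' = i := congrArg Prod.fst (Sum.inr.inj h)
    subst hi
    exact Or.inr ⟨j, rfl⟩
  · have hv : ((j : ℕ) + 1 : ℕ) = 0 := congrArg (fun z : Fin n × Fin m => (z.2 : ℕ)) (Sum.inr.inj h)
    omega
  · have hv : ((j : ℕ) + 1 : ℕ) = 0 := congrArg (fun z : Fin n × Fin m => (z.2 : ℕ)) (Sum.inr.inj h)
    omega

/-- Which contracts belong to the hospital `h_i^{p+1}`. -/
theorem hos_cases_succ {c : XN n m} {i : Fin n} {p : ℕ} (hp : p + 1 < m)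
    (h : hosN n m hm0 c = Sum.inr (i, ⟨p + 1, hp⟩)) :
    ∃ hq : p < m - 1, c = yC i ⟨p, hq⟩ ∨ c = zC i ⟨p, hq⟩ := by
  have hq : p < m - 1 := by omega
  refine ⟨hq, ?_⟩
  rcases c with ⟨i', k⟩ | ⟨i', j⟩ | ⟨i', j⟩ | ⟨i', j⟩
  · simp only [hosN] at h
    have hk := k.isLt
    have hk3 : (k : ℕ) = 0 ∨ (k : ℕ) = 1 ∨ (k : ℕ) = 2 := by omega
    rcases hk3 with h0 | h0 | h0
    · rw [if_pos h0] at h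
      exact absurd h (by simp)
    · rw [if_neg (by omega), if_pos h0] at h
      exact absurd h (by simp)
    · rw [if_neg (by omega), if_neg (by omega)] at h
      have hv : (0 : ℕ) = p + 1 := congrArg (fun z : Fin n × Fin m => (z.2 : ℕ)) (Sum.inr.inj h)
      omega
  · have hv : (0 : ℕ) = p + 1 := congrArg (fun z : Fin n × Fin m => (z.2 : ℕ)) (Sum.inr.inj h)
    omega
  · have hi : i' = i := congrArg Prod.fst (Sum.inr.inj h)
    subst hi
    have hv : ((j : ℕ) + 1 : ℕ) = p + 1 :=
      congrArg (fun z : Fin n × Fin m => (z.2 : ℕ)) (Sum.inr.inj h)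
    have hj : j = (⟨p, hq⟩ : Fin (m-1)) := Fin.ext (show (j : ℕ) = p by omega)
    subst hj
    exact Or.inl rfl
  · have hi : i' = i := congrArg Prod.fst (Sum.inr.inj h)
    subst hi
    have hv : ((j : ℕ) + 1 : ℕ) = p + 1 :=
      congrArg (fun z : Fin n × Fin m => (z.2 : ℕ)) (Sum.inr.inj h)
    have hj : j = (⟨p, hq⟩ : Fin (m-1)) := Fin.ext (show (j : ℕ) = p by omega)
    subst hj
    exact Or.inr rfl

/-- Which contracts belong to `h⁺`. -/
theorem hos_cases_plus {c : XN n m} (h : hosN n m hm0 c = Sum.inl 0) : ∃ i, c = r1C i := by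
  rcases c with ⟨i', k⟩ | ⟨i', j⟩ | ⟨i', j⟩ | ⟨i', j⟩
  · simp only [hosN] at h
    have hk := k.isLt
    have hk3 : (k : ℕ) = 0 ∨ (k : ℕ) = 1 ∨ (k : ℕ) = 2 := by omega
    rcases hk3 with h0 | h0 | h0
    · refine ⟨i', ?_⟩
      have hk2 : k = (⟨0, by decide⟩ : Fin 3) := Fin.ext h0
      subst hk2; rfl
    · rw [if_neg (by omega), if_pos h0] at h
      exact absurd (Sum.inl.inj h) (by decide)
    · rw [if_neg (by omega), if_neg (by omega)] at h
      exact absurd h (by simp)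
  · exact absurd h (by simp [hosN])
  · exact absurd h (by simp [hosN])
  · exact absurd h (by simp [hosN])

/-- Which contracts belong to `h⁻`. -/
theorem hos_cases_minus {c : XN n m} (h : hosN n m hm0 c = Sum.inl 1) : ∃ i, c = r2C i := by
  rcases c with ⟨i', k⟩ | ⟨i', j⟩ | ⟨i', j⟩ | ⟨i', j⟩
  · simp only [hosN] at h
    have hk := k.isLt
    have hk3 : (k : ℕ) = 0 ∨ (k : ℕ) = 1 ∨ (k : ℕ) = 2 := by omega
    rcases hk3 with h0 | h0 | h0
    · rw [if_pos h0] at h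
      exact absurd (Sum.inl.inj h) (by decide)
    · refine ⟨i', ?_⟩
      have hk2 : k = (⟨1, by decide⟩ : Fin 3) := Fin.ext h0
      subst hk2; rfl
    · rw [if_neg (by omega), if_neg (by omega)] at h
      exact absurd h (by simp)
  · exact absurd h (by simp [hosN])
  · exact absurd h (by simp [hosN])
  · exact absurd h (by simp [hosN])

end SubsetSumGen
namespace SubsetSumGen

section MktFacts

variable {n m : ℕ} (a : Fin n → ℕ) (t : ℕ) (α : ℝ) (hm0 : 0 < m)
  (hta : (t : ℝ) < ∑ j, (a j : ℝ)) (hα0 : (0:ℝ) ≤ α)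

theorem mkt_doc : (mkt n m a t α hm0 hta hα0).doc = docN n m := rfl
theorem mkt_hos : (mkt n m a t α hm0 hta hα0).hos = hosN n m hm0 := rfl
theorem mkt_u : (mkt n m a t α hm0 hta hα0).u = uN n m a t α := rfl
theorem mkt_s : (mkt n m a t α hm0 hta hα0).s = sN n m a t := rfl

theorem uN_r3 (i : Fin n) : uN n m a t α (r3C i) = 1 := rfl
theorem uN_x (i : Fin n) (j : Fin m) : uN n m a t α (xC i j) = 2 * α / m := rfl
theorem uN_y (i : Fin n) (j : Fin (m-1)) : uN n m a t α (yC i j) = 1 := rfl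
theorem uN_z (i : Fin n) (j : Fin (m-1)) : uN n m a t α (zC i j) = 2 * α := rfl

theorem sN_r1 (i : Fin n) : sN n m a t (r1C i) = (a i : ℝ) / t := rfl
theorem sN_r2 (i : Fin n) : sN n m a t (r2C i) = (a i : ℝ) / ((∑ j, (a j : ℝ)) - t) := rfl
theorem sN_r3 (i : Fin n) : sN n m a t (r3C i) = 1 := rfl
theorem sN_x (i : Fin n) (j : Fin m) : sN n m a t (xC i j) = 1 / m := rfl
theorem sN_y (i : Fin n) (j : Fin (m-1)) : sN n m a t (yC i j) = 1 := rfl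
theorem sN_z (i : Fin n) (j : Fin (m-1)) : sN n m a t (zC i j) = 1 := rfl

/-- General criterion for `Prefers` in the market `mkt`. -/
theorem prefers_of (X' : Finset (XN n m)) (c : XN n m)
    (h4 : rankN n m (docN n m c) (some c) < 4)
    (hall : ∀ x' ∈ X', docN n m x' = docN n m c →
      rankN n m (docN n m c) (some c) < rankN n m (docN n m c) (some x')) :
    (mkt n m a t α hm0 hta hα0).Prefers X' c := by
  refine ⟨fun x' hx' => ?_, fun _ => ?_⟩
  · obtain ⟨hmem, hd⟩ := Market.mem_restrD'.mp hx'
    exact Or.inl (hall x' hmem hd)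
  · exact Or.inl h4

end MktFacts

end SubsetSumGen
namespace SubsetSumGen

/-- The canonical embedding `Fin (m-1) → Fin m`. -/
def emb {m : ℕ} (j : Fin (m-1)) : Fin m := ⟨(j : ℕ), lt_of_lt_of_le j.isLt (Nat.sub_le m 1)⟩

@[simp] theorem emb_val {m : ℕ} (j : Fin (m-1)) : ((emb j : Fin m) : ℕ) = (j : ℕ) := rfl

section Prefers

variable {n m : ℕ} (a : Fin n → ℕ) (t : ℕ) (α : ℝ) (hm0 : 0 < m)
  (hta : (t : ℝ) < ∑ j, (a j : ℝ)) (hα0 : (0:ℝ) ≤ α)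

/-- The doctor `d_i^{j+2}` always prefers `y^{i,j+2}` unless she already holds it. -/
theorem prefers_y (X' : Finset (XN n m)) (i : Fin n) (j : Fin (m-1)) (hy : yC i j ∉ X') :
    (mkt n m a t α hm0 hta hα0).Prefers X' (yC i j) := by
  apply prefers_of
  · rw [docN_y i j]
    simp [yC, rankN]
    all_goals first | omega | (split_ifs <;> omega)
  · intro x' hx' hd
    rw [docN_y i j]
    have hdc : docN n m x' = (i, ⟨(j : ℕ) + 2, by have := j.isLt; omega⟩) :=
      hd.trans (docN_y i j)
    rcases doc_cases hdc with ⟨h0, -⟩ | ⟨j', rfl, hq⟩ | ⟨j', rfl, hq⟩ | ⟨j', rfl, hq⟩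
    · have h0' : (j : ℕ) + 2 = 0 := h0
      omega
    · have hq' : (j : ℕ) + 2 = (j' : ℕ) + 1 := hq
      simp [yC, xC, rankN]
      all_goals first | omega | (split_ifs <;> omega)
    · have hq' : (j : ℕ) + 2 = (j' : ℕ) + 2 := hq
      have hjj : j' = j := Fin.ext (show (j' : ℕ) = (j : ℕ) by omega)
      rw [hjj] at hx'
      exact absurd hx' hy
    · have hq' : (j : ℕ) + 2 = (j' : ℕ) + 1 := hq
      simp [yC, zC, rankN]
      all_goals first | omega | (split_ifs <;> omega)

/-- If the doctor `d_i^{j+1}` is unmatched, she prefers `z^{i,j+1}`. -/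
theorem prefers_z (X' : Finset (XN n m)) (i : Fin n) (j : Fin (m-1))
    (hx : xC i (emb j) ∉ X')
    (hyp : ∀ j' : Fin (m-1), (j' : ℕ) + 2 = (j : ℕ) + 1 → yC i j' ∉ X')
    (hz : zC i j ∉ X') :
    (mkt n m a t α hm0 hta hα0).Prefers X' (zC i j) := by
  apply prefers_of
  · rw [docN_z i j]
    simp [zC, rankN]
    all_goals first | omega | (split_ifs <;> omega)
  · intro x' hx' hd
    rw [docN_z i j]
    have hdc : docN n m x' = (i, ⟨(j : ℕ) + 1, by have := j.isLt; omega⟩) :=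
      hd.trans (docN_z i j)
    rcases doc_cases hdc with ⟨h0, -⟩ | ⟨j', rfl, hq⟩ | ⟨j', rfl, hq⟩ | ⟨j', rfl, hq⟩
    · have h0' : (j : ℕ) + 1 = 0 := h0
      omega
    · have hq' : (j : ℕ) + 1 = (j' : ℕ) + 1 := hq
      have hjj : j' = emb j := Fin.ext (show (j' : ℕ) = (j : ℕ) by omega)
      rw [hjj] at hx'
      exact absurd hx' hx
    · have hq' : (j : ℕ) + 1 = (j' : ℕ) + 2 := hq
      exact absurd hx' (hyp j' hq'.symm)
    · have hq' : (j : ℕ) + 1 = (j' : ℕ) + 1 := hq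
      have hjj : j' = j := Fin.ext (show (j' : ℕ) = (j : ℕ) by omega)
      rw [hjj] at hx'
      exact absurd hx' hz

/-- If the doctor `d_i^0` is entirely unmatched, she prefers `r^{i,3}`. -/
theorem prefers_r3 (X' : Finset (XN n m)) (i : Fin n)
    (h1 : r1C i ∉ X') (h2 : r2C i ∉ X') (h3 : r3C i ∉ X') :
    (mkt n m a t α hm0 hta hα0).Prefers X' (r3C i) := by
  apply prefers_of
  · rw [docN_r3 i]
    simp [r3C, rankN]
    all_goals first | omega | (split_ifs <;> omega)
  · intro x' hx' hd
    have hdc : docN n m x' = (i, ⟨0, by omega⟩) := hd.trans (docN_r3 i)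
    rcases doc_cases hdc with ⟨h0, hr⟩ | ⟨j', rfl, hq⟩ | ⟨j', rfl, hq⟩ | ⟨j', rfl, hq⟩
    · rcases hr with rfl | rfl | rfl
      · exact absurd hx' h1
      · exact absurd hx' h2
      · exact absurd hx' h3
    · have hq' : (0 : ℕ) = (j' : ℕ) + 1 := hq
      omega
    · have hq' : (0 : ℕ) = (j' : ℕ) + 2 := hq
      omega
    · have hq' : (0 : ℕ) = (j' : ℕ) + 1 := hq
      omega

/-- If the doctor `d_i^{j+1}` holds at most `z^{i,j+1}`, she prefers `x^{i,j+1}`. -/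
theorem prefers_x (X' : Finset (XN n m)) (i : Fin n) (j : Fin m)
    (hx : xC i j ∉ X')
    (hyp : ∀ j' : Fin (m-1), (j' : ℕ) + 2 = (j : ℕ) + 1 → yC i j' ∉ X') :
    (mkt n m a t α hm0 hta hα0).Prefers X' (xC i j) := by
  apply prefers_of
  · rw [docN_x i j]
    simp [xC, rankN]
    all_goals first | omega | (split_ifs <;> omega)
  · intro x' hx' hd
    rw [docN_x i j]
    have hdc : docN n m x' = (i, ⟨(j : ℕ) + 1, by have := j.isLt; omega⟩) :=
      hd.trans (docN_x i j)
    rcases doc_cases hdc with ⟨h0, -⟩ | ⟨j', rfl, hq⟩ | ⟨j', rfl, hq⟩ | ⟨j', rfl, hq⟩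
    · have h0' : (j : ℕ) + 1 = 0 := h0
      omega
    · have hq' : (j : ℕ) + 1 = (j' : ℕ) + 1 := hq
      have hjj : j' = j := Fin.ext (show (j' : ℕ) = (j : ℕ) by omega)
      rw [hjj] at hx'
      exact absurd hx' hx
    · have hq' : (j : ℕ) + 1 = (j' : ℕ) + 2 := hq
      exact absurd hx' (hyp j' hq'.symm)
    · have hq' : (j : ℕ) + 1 = (j' : ℕ) + 1 := hq
      simp [xC, zC, rankN]
      all_goals first | omega | (split_ifs <;> omega)

end Prefers

end SubsetSumGen
namespace SubsetSumGen

/-- `(j:ℕ)+1 < m` for `j : Fin (m-1)`. -/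
theorem succ_lt {m : ℕ} (j : Fin (m-1)) : (j : ℕ) + 1 < m := by
  have := j.isLt; omega

/-- The hospital `h_i^{j+1}`. -/
def hospS {n m : ℕ} (i : Fin n) (j : Fin (m-1)) : HN n m := Sum.inr (i, ⟨(j : ℕ) + 1, succ_lt j⟩)

/-- The hospital `h_i^0`. -/
def hosp0 {n m : ℕ} (hm0 : 0 < m) (i : Fin n) : HN n m := Sum.inr (i, ⟨0, hm0⟩)

section Blocking

variable {n m : ℕ} (a : Fin n → ℕ) (t : ℕ) (α : ℝ) (hm0 : 0 < m)
  (hta : (t : ℝ) < ∑ j, (a j : ℝ)) (hα0 : (0:ℝ) ≤ α)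

/-- If neither `y^{i,j+2}` nor `z^{i,j+1}` is signed, `{y^{i,j+2}}` blocks at `h_i^{j+1}`. -/
theorem blocking_y (X' : Finset (XN n m)) (i : Fin n) (j : Fin (m-1)) (hα1 : 0 < α)
    (hy : yC i j ∉ X') (hz : zC i j ∉ X') :
    (mkt n m a t α hm0 hta hα0).IsBlocking α X' (hospS i j) {yC i j} := by
  set M := mkt n m a t α hm0 hta hα0 with hMdef
  have he : M.restrH X' (hospS i j) = ∅ := by
    rw [Finset.eq_empty_iff_forall_notMem]
    intro c hc
    obtain ⟨hcX, hch⟩ := Market.mem_restrH'.mp hc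
    obtain ⟨hq, hco⟩ := hos_cases_succ hm0 (succ_lt j) hch
    have hjj : (⟨(j : ℕ), hq⟩ : Fin (m-1)) = j := Fin.ext rfl
    rw [hjj] at hco
    rcases hco with rfl | rfl
    · exact hy hcX
    · exact hz hcX
  refine ⟨?_, ?_, ?_, ?_⟩
  · intro x hx
    erw [Finset.mem_singleton] at hx
    subst hx
    rfl
  · exact M.isMatching_singleton _ (le_of_eq (rfl : M.s (yC i j) = 1))
  · intro x hx
    erw [Finset.mem_sdiff, Finset.mem_singleton] at hx
    obtain ⟨rfl, -⟩ := hx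
    exact prefers_y a t α hm0 hta hα0 X' i j hy
  · rw [he]
    have h1 : M.uSum {yC i j} = 1 := by
      erw [Market.uSum, Finset.sum_singleton]; rfl
    have h0 : M.uSum (∅ : Finset (XN n m)) = 0 := by
      exact Finset.sum_empty
    erw [h1, h0, mul_zero]
    norm_num

/-- If `y^{i,j+2}` is signed but the doctor `d_i^{j+1}` is unmatched,
`{z^{i,j+1}}` blocks at `h_i^{j+1}`. -/
theorem blocking_z (X' : Finset (XN n m)) (i : Fin n) (j : Fin (m-1)) (hα1 : 0 < α)
    (hz0 : zC i j ∉ X') (hx0 : xC i (emb j) ∉ X')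
    (hyp : ∀ j' : Fin (m-1), (j' : ℕ) + 2 = (j : ℕ) + 1 → yC i j' ∉ X') :
    (mkt n m a t α hm0 hta hα0).IsBlocking α X' (hospS i j) {zC i j} := by
  set M := mkt n m a t α hm0 hta hα0 with hMdef
  have hsub : M.restrH X' (hospS i j) ⊆ {yC i j} := by
    intro c hc
    obtain ⟨hcX, hch⟩ := Market.mem_restrH'.mp hc
    obtain ⟨hq, hco⟩ := hos_cases_succ hm0 (succ_lt j) hch
    have hjj : (⟨(j : ℕ), hq⟩ : Fin (m-1)) = j := Fin.ext rfl
    rw [hjj] at hco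
    rcases hco with rfl | rfl
    · exact Finset.mem_singleton_self _
    · exact absurd hcX hz0
  refine ⟨?_, ?_, ?_, ?_⟩
  · intro x hx
    erw [Finset.mem_singleton] at hx
    subst hx
    rfl
  · exact M.isMatching_singleton _ (le_of_eq (rfl : M.s (zC i j) = 1))
  · intro x hx
    erw [Finset.mem_sdiff, Finset.mem_singleton] at hx
    obtain ⟨rfl, -⟩ := hx
    exact prefers_z a t α hm0 hta hα0 X' i j hx0 hyp hz0
  · have h1 : M.uSum {zC i j} = 2 * α := by
      erw [Market.uSum, Finset.sum_singleton]; rfl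
    have h2 : M.uSum {yC i j} = 1 := by
      erw [Market.uSum, Finset.sum_singleton]; rfl
    have hle : M.uSum (M.restrH X' (hospS i j)) ≤ 1 := by
      rw [← h2]; exact M.uSum_mono hsub
    have hge : 0 ≤ M.uSum (M.restrH X' (hospS i j)) := M.uSum_nonneg' _
    have := mul_le_mul_of_nonneg_left hle (le_of_lt hα1)
    rw [h1]
    nlinarith

/-- If the doctor `d_i^0` is unmatched and at most one `x`-contract is signed,
`{r^{i,3}}` blocks at `h_i^0`. -/
theorem blocking_r3 (X' : Finset (XN n m)) (i : Fin n) (hα1 : 1 < α)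
    (hm2 : 2 * α ^ 2 < (m : ℝ)) (jv : Fin m)
    (hxa : ∀ j : Fin m, j ≠ jv → xC i j ∉ X')
    (h1 : r1C i ∉ X') (h2 : r2C i ∉ X') (h3 : r3C i ∉ X') :
    (mkt n m a t α hm0 hta hα0).IsBlocking α X' (hosp0 hm0 i) {r3C i} := by
  set M := mkt n m a t α hm0 hta hα0 with hMdef
  have hmR : (0:ℝ) < m := by exact_mod_cast hm0
  have hsub : M.restrH X' (hosp0 hm0 i) ⊆ {xC i jv} := by
    intro c hc
    obtain ⟨hcX, hch⟩ := Market.mem_restrH'.mp hc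
    rcases hos_cases_h0 hm0 hch with rfl | ⟨j, rfl⟩
    · exact absurd hcX h3
    · by_cases hj : j = jv
      · subst hj; exact Finset.mem_singleton_self _
      · exact absurd hcX (hxa j hj)
  refine ⟨?_, ?_, ?_, ?_⟩
  · intro x hx
    erw [Finset.mem_singleton] at hx
    subst hx
    rfl
  · exact M.isMatching_singleton _ (le_of_eq (rfl : M.s (r3C i) = 1))
  · intro x hx
    erw [Finset.mem_sdiff, Finset.mem_singleton] at hx
    obtain ⟨rfl, -⟩ := hx
    exact prefers_r3 a t α hm0 hta hα0 X' i h1 h2 h3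
  · have h1' : M.uSum {r3C i} = 1 := by
      erw [Market.uSum, Finset.sum_singleton]; rfl
    have h2' : M.uSum {xC i jv} = 2 * α / m := by
      erw [Market.uSum, Finset.sum_singleton]; rfl
    have hle : M.uSum (M.restrH X' (hosp0 hm0 i)) ≤ 2 * α / m := by
      rw [← h2']; exact M.uSum_mono hsub
    have hge : 0 ≤ M.uSum (M.restrH X' (hosp0 hm0 i)) := M.uSum_nonneg' _
    have hmul := mul_le_mul_of_nonneg_left hle (by linarith : (0:ℝ) ≤ α)
    have hkey : α * (2 * α / m) < 1 := by
      rw [show α * (2 * α / (m:ℝ)) = 2 * α ^ 2 / m by ring]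
      exact (div_lt_one hmR).mpr hm2
    rw [h1']
    nlinarith

/-- If all `x`-contracts and `y`-contracts are unsigned but `r^{i,3}` is signed,
the set of all `x`-contracts blocks at `h_i^0`. -/
theorem blocking_allx (X' : Finset (XN n m)) (i : Fin n) (hα1 : 1 < α)
    (hxall : ∀ j : Fin m, xC i j ∉ X')
    (hyall : ∀ j' : Fin (m-1), yC i j' ∉ X')
    (hr3 : r3C i ∈ X') :
    (mkt n m a t α hm0 hta hα0).IsBlocking α X'
      (hosp0 hm0 i) (Finset.univ.image (fun j : Fin m => xC i j)) := by
  classical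
  set M := mkt n m a t α hm0 hta hα0 with hMdef
  have hmR : (0:ℝ) < m := by exact_mod_cast hm0
  have hmne : (m:ℝ) ≠ 0 := ne_of_gt hmR
  have hinj : ∀ j1 ∈ (Finset.univ : Finset (Fin m)), ∀ j2 ∈ Finset.univ,
      xC i j1 = xC i j2 → j1 = j2 := by
    intro j1 _ j2 _ h
    simpa [xC] using h
  set XX := Finset.univ.image (fun j : Fin m => xC i j) with hXX
  have huXX : M.uSum XX = 2 * α := by
    have hsi : ∑ x ∈ Finset.image (fun j : Fin m => xC i j) Finset.univ, M.u x
        = ∑ j : Fin m, M.u (xC i j) := Finset.sum_image hinj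
    have hv : ∀ j : Fin m, M.u (xC i j) = 2 * α / m := fun _ => rfl
    have h2 : ∑ j : Fin m, M.u (xC i j) = 2 * α := by
      rw [Finset.sum_congr rfl (fun j _ => hv j), Finset.sum_const, Finset.card_univ,
        Fintype.card_fin, nsmul_eq_mul]
      field_simp
    exact hsi.trans h2
  have hsXX : M.sSum XX = 1 := by
    have hsi : ∑ x ∈ Finset.image (fun j : Fin m => xC i j) Finset.univ, M.s x
        = ∑ j : Fin m, M.s (xC i j) := Finset.sum_image hinj
    have hv : ∀ j : Fin m, M.s (xC i j) = 1 / m := fun _ => rfl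
    have h2 : ∑ j : Fin m, M.s (xC i j) = 1 := by
      rw [Finset.sum_congr rfl (fun j _ => hv j), Finset.sum_const, Finset.card_univ,
        Fintype.card_fin, nsmul_eq_mul]
      field_simp
    exact hsi.trans h2
  have hsub : M.restrH X' (hosp0 hm0 i) ⊆ {r3C i} := by
    intro c hc
    obtain ⟨hcX, hch⟩ := Market.mem_restrH'.mp hc
    rcases hos_cases_h0 hm0 hch with rfl | ⟨j, rfl⟩
    · exact Finset.mem_singleton_self _
    · exact absurd hcX (hxall j)
  refine ⟨?_, ?_, ?_, ?_⟩
  · intro x hx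
    erw [Finset.mem_image] at hx
    obtain ⟨j, -, rfl⟩ := hx
    rfl
  · constructor
    · intro d
      refine Finset.card_le_one.mpr ?_
      intro c1 hc1 c2 hc2
      obtain ⟨hm1, hd1⟩ := Market.mem_restrD'.mp hc1
      obtain ⟨hm2, hd2⟩ := Market.mem_restrD'.mp hc2
      erw [Finset.mem_image] at hm1 hm2
      obtain ⟨j1, -, rfl⟩ := hm1
      obtain ⟨j2, -, rfl⟩ := hm2
      have hdd : docN n m (xC i j1) = docN n m (xC i j2) := hd1.trans hd2.symm
      rw [docN_x, docN_x] at hdd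
      have hv : (j1:ℕ) + 1 = (j2:ℕ) + 1 := congrArg (fun z : DN n m => (z.2 : ℕ)) hdd
      have : j1 = j2 := Fin.ext (by omega)
      rw [this]
    · intro h
      have hsub' : M.restrH XX h ⊆ XX := fun c hc => (Market.mem_restrH'.mp hc).1
      calc M.sSum (M.restrH XX h) ≤ M.sSum XX := M.sSum_mono hsub'
      _ = 1 := hsXX
  · intro x hx
    erw [Finset.mem_sdiff] at hx
    obtain ⟨hximg, hxnot⟩ := hx
    erw [Finset.mem_image] at hximg
    obtain ⟨j, -, rfl⟩ := hximg
    exact prefers_x a t α hm0 hta hα0 X' i j hxnot (fun j' _ => hyall j')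
  · have h2' : M.uSum {r3C i} = 1 := by
      erw [Market.uSum, Finset.sum_singleton]; rfl
    have hle : M.uSum (M.restrH X' (hosp0 hm0 i)) ≤ 1 := by
      rw [← h2']; exact M.uSum_mono hsub
    have hge : 0 ≤ M.uSum (M.restrH X' (hosp0 hm0 i)) := M.uSum_nonneg' _
    have := mul_le_mul_of_nonneg_left hle (by linarith : (0:ℝ) ≤ α)
    erw [huXX]
    nlinarith

end Blocking

end SubsetSumGen
namespace SubsetSumGen

/-- **Key lemma**: if a matching signs neither `r^{i,1}` nor `r^{i,2}`, it is not `α`-stable. -/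
theorem key {n m : ℕ} (α : ℝ) (hα : 1 < α) (a : Fin n → ℕ) (t : ℕ)
    (hm0 : 0 < m) (hm2 : 2 * α ^ 2 < (m : ℝ))
    (hta : (t : ℝ) < ∑ j, (a j : ℝ)) (hα0 : (0:ℝ) ≤ α)
    (X' : Finset (XN n m)) (i : Fin n)
    (hr1 : r1C i ∉ X') (hr2 : r2C i ∉ X') :
    ¬ (mkt n m a t α hm0 hta hα0).IsStable α X' := by
  classical
  intro hst
  set M := mkt n m a t α hm0 hta hα0 with hMdef
  have hM : M.IsMatching X' := hst.1
  have hnb : ∀ h X'', ¬ M.IsBlocking α X' h X'' := hst.2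
  have hα1 : (0:ℝ) < α := by linarith
  have hmR : (0:ℝ) < m := by exact_mod_cast hm0
  -- hospital budgets exclude `y^{i,j+2}` together with `z^{i,j+1}`
  have excl_yz : ∀ j : Fin (m-1), yC i j ∈ X' → zC i j ∉ X' := by
    intro j hy hz
    have hpb := M.pair_budget hM (show yC i j ≠ zC i j by simp [yC, zC]) hy hz
      (rfl : M.hos (yC i j) = hospS i j) (rfl : M.hos (zC i j) = hospS i j)
    have e1 : M.s (yC i j) = 1 := rfl
    have e2 : M.s (zC i j) = 1 := rfl
    rw [e1, e2] at hpb
    linarith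
  -- `r^{i,3}` together with any `x^{i,j+1}` exceeds the budget of `h_i^0`
  have r3_excl_x : r3C i ∈ X' → ∀ j : Fin m, xC i j ∉ X' := by
    intro hr3 j hx
    have hpb := M.pair_budget hM (show r3C i ≠ xC i j by simp [r3C, xC]) hr3 hx
      (rfl : M.hos (r3C i) = hosp0 hm0 i) (rfl : M.hos (xC i j) = hosp0 hm0 i)
    have e1 : M.s (r3C i) = 1 := rfl
    have e2 : M.s (xC i j) = 1 / m := rfl
    rw [e1, e2] at hpb
    have : (0:ℝ) < 1 / m := by positivity
    linarith
  -- stability forces `y^{i,j+2} ∈ X'` or `z^{i,j+1} ∈ X'` for every `j`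
  have block_y : ∀ j : Fin (m-1), yC i j ∈ X' ∨ zC i j ∈ X' := by
    intro j
    by_contra hcon
    push_neg at hcon
    exact hnb (hospS i j) {yC i j}
      (blocking_y a t α hm0 hta hα0 X' i j hα1 hcon.1 hcon.2)
  by_cases hally : ∀ j' : Fin (m-1), yC i j' ∉ X'
  · -- Case A: no `y` is signed, hence every `z` is signed
    have hzall : ∀ j' : Fin (m-1), zC i j' ∈ X' :=
      fun j' => (block_y j').resolve_left (fun h => hally j' h)
    have hxsmall : ∀ j : Fin m, (j : ℕ) < m - 1 → xC i j ∉ X' := by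
      intro j hj hx
      have hz := hzall ⟨(j : ℕ), hj⟩
      exact M.doc_excl hM (show zC i ⟨(j : ℕ), hj⟩ ≠ xC i j by simp [zC, xC]) hz hx
        ((docN_z i ⟨(j : ℕ), hj⟩).trans (docN_x i j).symm)
    by_cases hr3 : r3C i ∈ X'
    · exact hnb (hosp0 hm0 i) _
        (blocking_allx a t α hm0 hta hα0 X' i hα (r3_excl_x hr3) hally hr3)
    · refine hnb (hosp0 hm0 i) {r3C i}
        (blocking_r3 a t α hm0 hta hα0 X' i hα hm2 ⟨m - 1, by omega⟩ ?_ hr1 hr2 hr3)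
      intro j hj
      refine hxsmall j ?_
      have hlt := j.isLt
      have : (j : ℕ) ≠ m - 1 := fun h => hj (Fin.ext h)
      omega
  · -- Case B: some `y` is signed; take the least one
    push_neg at hally
    obtain ⟨jw, hjw⟩ := hally
    have hne : (Finset.univ.filter (fun j : Fin (m-1) => yC i j ∈ X')).Nonempty :=
      ⟨jw, Finset.mem_filter.mpr ⟨Finset.mem_univ _, hjw⟩⟩
    set j0 := (Finset.univ.filter (fun j : Fin (m-1) => yC i j ∈ X')).min' hne with hj0
    have hy0 : yC i j0 ∈ X' :=
      (Finset.mem_filter.mp (Finset.min'_mem _ hne)).2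
    have hmin : ∀ j' : Fin (m-1), yC i j' ∈ X' → (j0 : ℕ) ≤ (j' : ℕ) := by
      intro j' h
      have h2 : j0 ≤ j' := Finset.min'_le _ j' (Finset.mem_filter.mpr ⟨Finset.mem_univ _, h⟩)
      exact Fin.le_def.mp h2
    have hz0 : zC i j0 ∉ X' := excl_yz j0 hy0
    have hyprev : ∀ j' : Fin (m-1), (j' : ℕ) < (j0 : ℕ) → yC i j' ∉ X' := by
      intro j' hlt hy
      exact absurd (hmin j' hy) (by omega)
    -- all `y`'s above `j0` are signed
    have hup : ∀ p : ℕ, ∀ hp : p < m - 1, (j0 : ℕ) ≤ p → yC i ⟨p, hp⟩ ∈ X' := by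
      intro p
      induction p with
      | zero =>
        intro hp hle
        have hjj : (⟨0, hp⟩ : Fin (m-1)) = j0 := Fin.ext (show 0 = (j0 : ℕ) by omega)
        rw [hjj]; exact hy0
      | succ p ih =>
        intro hp hle
        by_cases hc : (j0 : ℕ) ≤ p
        · have hpm : p < m - 1 := by omega
          have hyp' := ih hpm hc
          have hzz : zC i ⟨p + 1, hp⟩ ∉ X' := by
            intro hz
            exact M.doc_excl hM
              (show yC i ⟨p, hpm⟩ ≠ zC i ⟨p + 1, hp⟩ by simp [yC, zC]) hyp' hz
              ((docN_y i ⟨p, hpm⟩).trans (docN_z i ⟨p + 1, hp⟩).symm)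
          exact (block_y ⟨p + 1, hp⟩).resolve_right (fun h => hzz h)
        · have hjj : (⟨p + 1, hp⟩ : Fin (m-1)) = j0 := Fin.ext (show p + 1 = (j0 : ℕ) by omega)
          rw [hjj]; exact hy0
    -- no `x`-contract other than possibly `x^{i,j0+1}` is signed
    have hxother : ∀ j : Fin m, j ≠ emb j0 → xC i j ∉ X' := by
      intro j hne' hx
      have hnev : (j : ℕ) ≠ (j0 : ℕ) := fun h => hne' (Fin.ext h)
      rcases lt_or_gt_of_ne hnev with hlt | hgt
      · have hjm : (j : ℕ) < m - 1 := by have := j0.isLt; omega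
        have hynot : yC i ⟨(j : ℕ), hjm⟩ ∉ X' := hyprev ⟨(j : ℕ), hjm⟩ hlt
        have hzin : zC i ⟨(j : ℕ), hjm⟩ ∈ X' :=
          (block_y ⟨(j : ℕ), hjm⟩).resolve_left (fun h => hynot h)
        exact M.doc_excl hM
          (show zC i ⟨(j : ℕ), hjm⟩ ≠ xC i j by simp [zC, xC]) hzin hx
          ((docN_z i ⟨(j : ℕ), hjm⟩).trans (docN_x i j).symm)
      · have hjm : (j : ℕ) - 1 < m - 1 := by have := j.isLt; omega
        have hyin := hup ((j : ℕ) - 1) hjm (by omega)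
        refine M.doc_excl hM
          (show yC i ⟨(j : ℕ) - 1, hjm⟩ ≠ xC i j by simp [yC, xC]) hyin hx ?_
        show docN n m (yC i ⟨(j : ℕ) - 1, hjm⟩) = docN n m (xC i j)
        rw [docN_y, docN_x]
        exact congrArg (fun q => (i, q)) (Fin.ext (show ((j:ℕ) - 1) + 2 = (j:ℕ) + 1 by omega))
    by_cases hr3 : r3C i ∈ X'
    · -- `x^{i,j0+1}` is also excluded; `{z^{i,j0+1}}` blocks
      have hx0 : xC i (emb j0) ∉ X' := r3_excl_x hr3 (emb j0)
      refine hnb (hospS i j0) {zC i j0}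
        (blocking_z a t α hm0 hta hα0 X' i j0 hα1 hz0 hx0 ?_)
      intro j' hj'
      exact hyprev j' (by omega)
    · -- `{r^{i,3}}` blocks
      exact hnb (hosp0 hm0 i) {r3C i}
        (blocking_r3 a t α hm0 hta hα0 X' i hα hm2 (emb j0) hxother hr1 hr2 hr3)

end SubsetSumGen

/-- (No-instance direction of the subset-sum reduction.) Let `α > 1` and
`m = ⌈3α²⌉`. If no subset `I` of `{1,…,n}` satisfies `Σ_{i∈I} aᵢ = t`, then the market
`N(a,t,α)` admits no `α`-stable matching; more precisely, any matching `X'` with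
`X' ∩ {r^{i*,1}, r^{i*,2}} = ∅` for some index `i*` is not `α`-stable. -/
theorem subsetSumGen_no_instance_unstable (α : ℝ) (hα : 1 < α) (n : ℕ) (a : Fin n → ℕ)
    (t : ℕ) (ha : ∀ i, 0 < a i) (ht : 0 < t) (hta : t < ∑ i, a i)
    (m : ℕ) (hm : m = ⌈3 * α ^ 2⌉₊)
    (hno : ¬ ∃ I : Finset (Fin n), ∑ i ∈ I, a i = t) :
    (¬ ∃ X' : Finset (SubsetSumGen.XN n m),
        (SubsetSumGen.mkt n m a t α
          (by rw [hm]; exact Nat.ceil_pos.mpr (by positivity))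
          (by exact_mod_cast hta) (by linarith)).IsStable α X') ∧
    (∀ X' : Finset (SubsetSumGen.XN n m),
      (SubsetSumGen.mkt n m a t α
          (by rw [hm]; exact Nat.ceil_pos.mpr (by positivity))
          (by exact_mod_cast hta) (by linarith)).IsMatching X' →
      (∃ istar : Fin n,
          (Sum.inl (istar, (0 : Fin 3)) : SubsetSumGen.XN n m) ∉ X' ∧
          (Sum.inl (istar, (1 : Fin 3)) : SubsetSumGen.XN n m) ∉ X') →
      ¬ (SubsetSumGen.mkt n m a t α
          (by rw [hm]; exact Nat.ceil_pos.mpr (by positivity))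
          (by exact_mod_cast hta) (by linarith)).IsStable α X') := by

  classical
  have hm0 : 0 < m := by rw [hm]; exact Nat.ceil_pos.mpr (by positivity)
  have hα0 : (0:ℝ) ≤ α := by linarith
  have htaR : (t : ℝ) < ∑ j, ((a j : ℕ) : ℝ) := by exact_mod_cast hta
  have hm2 : 2 * α ^ 2 < (m : ℝ) := by
    have h3 : 3 * α ^ 2 ≤ (⌈3 * α ^ 2⌉₊ : ℝ) := Nat.le_ceil _
    have hα2 : (0:ℝ) < α ^ 2 := by positivity
    rw [hm]
    nlinarith
  have part2 : ∀ X' : Finset (SubsetSumGen.XN n m),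
      (SubsetSumGen.mkt n m a t α hm0 htaR hα0).IsMatching X' →
      (∃ istar : Fin n,
          (Sum.inl (istar, (0 : Fin 3)) : SubsetSumGen.XN n m) ∉ X' ∧
          (Sum.inl (istar, (1 : Fin 3)) : SubsetSumGen.XN n m) ∉ X') →
      ¬ (SubsetSumGen.mkt n m a t α hm0 htaR hα0).IsStable α X' := by
    rintro X' hMX ⟨istar, hi1, hi2⟩
    have e1 : (Sum.inl (istar, (0 : Fin 3)) : SubsetSumGen.XN n m) = SubsetSumGen.r1C istar :=
      rfl
    have e2 : (Sum.inl (istar, (1 : Fin 3)) : SubsetSumGen.XN n m) = SubsetSumGen.r2C istar :=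
      rfl
    rw [e1] at hi1
    rw [e2] at hi2
    exact SubsetSumGen.key α hα a t hm0 hm2 htaR hα0 X' istar hi1 hi2
  constructor
  · -- no `α`-stable matching exists
    rintro ⟨X', hst⟩
    set M := SubsetSumGen.mkt n m a t α hm0 htaR hα0 with hMdef
    have hst' : M.IsStable α X' := hst
    have hM : M.IsMatching X' := hst'.1
    have hall : ∀ i : Fin n, SubsetSumGen.r1C i ∈ X' ∨ SubsetSumGen.r2C i ∈ X' := by
      intro i
      by_contra hcon
      push_neg at hcon
      exact SubsetSumGen.key α hα a t hm0 hm2 htaR hα0 X' i hcon.1 hcon.2 hst'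
    set I : Finset (Fin n) := Finset.univ.filter (fun i => SubsetSumGen.r1C i ∈ X') with hI
    set Ic : Finset (Fin n) := Finset.univ.filter (fun i => ¬ SubsetSumGen.r1C i ∈ X')
      with hIc
    have ht0 : (0:ℝ) < t := by exact_mod_cast ht
    have haT : (0:ℝ) < (∑ j, (a j : ℝ)) - t := by
      have : (t : ℝ) < ∑ j, (a j : ℝ) := htaR
      linarith
    -- budget of `h⁺`
    have htP : ∑ i' ∈ I, (a i' : ℝ) ≤ t := by
      have hsubP : I.image (fun i' => (SubsetSumGen.r1C i' : SubsetSumGen.XN n m))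
          ⊆ M.restrH X' (Sum.inl 0) := by
        intro c hc
        obtain ⟨i', hi', rfl⟩ := Finset.mem_image.mp hc
        exact Market.mem_restrH'.mpr ⟨(Finset.mem_filter.mp hi').2, rfl⟩
      have hinjP : ∀ i1 ∈ I, ∀ i2 ∈ I,
          (SubsetSumGen.r1C i1 : SubsetSumGen.XN n m) = SubsetSumGen.r1C i2 → i1 = i2 := by
        intro i1 _ i2 _ h
        simpa [SubsetSumGen.r1C] using h
      have h1 : M.sSum (I.image fun i' => (SubsetSumGen.r1C i' : SubsetSumGen.XN n m)) ≤ 1 :=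
        (M.sSum_mono hsubP).trans (hM.2 (Sum.inl 0))
      have h2 : M.sSum (I.image fun i' => (SubsetSumGen.r1C i' : SubsetSumGen.XN n m))
          = ∑ i' ∈ I, (a i' : ℝ) / t := by
        rw [Market.sSum]
        exact (Finset.sum_image hinjP).trans (Finset.sum_congr rfl (fun i' _ => rfl))
      rw [h2, ← Finset.sum_div] at h1
      exact (div_le_one ht0).mp h1
    -- budget of `h⁻`
    have htM : ∑ i' ∈ Ic, (a i' : ℝ) ≤ (∑ j, (a j : ℝ)) - t := by
      have hsubM : Ic.image (fun i' => (SubsetSumGen.r2C i' : SubsetSumGen.XN n m))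
          ⊆ M.restrH X' (Sum.inl 1) := by
        intro c hc
        obtain ⟨i', hi', rfl⟩ := Finset.mem_image.mp hc
        have hr2 : SubsetSumGen.r2C i' ∈ X' :=
          (hall i').resolve_left (Finset.mem_filter.mp hi').2
        exact Market.mem_restrH'.mpr ⟨hr2, rfl⟩
      have hinjM : ∀ i1 ∈ Ic, ∀ i2 ∈ Ic,
          (SubsetSumGen.r2C i1 : SubsetSumGen.XN n m) = SubsetSumGen.r2C i2 → i1 = i2 := by
        intro i1 _ i2 _ h
        simpa [SubsetSumGen.r2C] using h
      have h1 : M.sSum (Ic.image fun i' => (SubsetSumGen.r2C i' : SubsetSumGen.XN n m)) ≤ 1 :=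
        (M.sSum_mono hsubM).trans (hM.2 (Sum.inl 1))
      have h2 : M.sSum (Ic.image fun i' => (SubsetSumGen.r2C i' : SubsetSumGen.XN n m))
          = ∑ i' ∈ Ic, (a i' : ℝ) / ((∑ j, (a j : ℝ)) - t) := by
        rw [Market.sSum]
        exact (Finset.sum_image hinjM).trans (Finset.sum_congr rfl (fun i' _ => rfl))
      rw [h2, ← Finset.sum_div] at h1
      exact (div_le_one haT).mp h1
    have hsplit : ∑ i' ∈ I, (a i' : ℝ) + ∑ i' ∈ Ic, (a i' : ℝ) = ∑ i', (a i' : ℝ) :=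
      Finset.sum_filter_add_sum_filter_not _ _ _
    have heq : ∑ i' ∈ I, (a i' : ℝ) = t := by linarith
    apply hno
    refine ⟨I, ?_⟩
    have hcast : ((∑ i' ∈ I, a i' : ℕ) : ℝ) = (t : ℝ) := by push_cast; exact heq
    exact_mod_cast hcast
  · intro X' hMX hex
    exact part2 X' hMX hex
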